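/- If a graph G has F-width at most w with respect to the family C_k of graphs of clique-width at most k (i.e., G is a w-probe C_k-graph), then the clique-width of G is at most k·2^w. -/
import Mathlib


/-- A `k`-expression: create a labeled vertex, disjoint union, join `η_{i,j}`
adding all edges between label classes `i` and `j`, and relabel `ρ_{i→j}`. -/
inductive KExpr (k : ℕ) : Type
  | vert (v : ℕ) (i : Fin k) : KExpr k
  | union (a b : KExpr k) : KExpr k
  | join (i j : Fin k) (t : KExpr k) : KExpr k
  | relabel (i j : Fin k) (t : KExpr k) : KExpr k

namespace KExpr

/-- The vertices of the generated graph together with their current labels. -/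
def labels {k : ℕ} : KExpr k → List (ℕ × Fin k)
  | .vert v i => [(v, i)]
  | .union a b => labels a ++ labels b
  | .join _ _ t => labels t
  | .relabel i j t => (labels t).map fun p => if p.2 = i then (p.1, j) else p

/-- The edges of the generated graph. -/
def edges {k : ℕ} : KExpr k → List (ℕ × ℕ)
  | .vert _ _ => []
  | .union a b => edges a ++ edges b
  | .join i j t =>
      ((labels t).flatMap fun p => (labels t).filterMap fun q =>
        if p.2 = i ∧ q.2 = j ∧ p.1 ≠ q.1 then some (p.1, q.1) else none) ++ edges t
  | .relabel _ _ t => edges t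

/-- Well-formedness: unions are over disjoint vertex sets and joins use two
distinct labels. -/
def WF {k : ℕ} : KExpr k → Prop
  | .vert _ _ => True
  | .union a b => WF a ∧ WF b ∧ ∀ p ∈ labels a, ∀ q ∈ labels b, p.1 ≠ q.1
  | .join i j t => i ≠ j ∧ WF t
  | .relabel _ _ t => WF t

end KExpr

/-- The `k`-expression `e` generates the graph `G`. -/
def Generates {k : ℕ} {V : Type} [Fintype V] (e : KExpr k) (G : SimpleGraph V) : Prop :=
  ∃ f : V → ℕ, Function.Injective f ∧
    (∀ v : V, f v ∈ (KExpr.labels e).map Prod.fst) ∧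
    (∀ x ∈ (KExpr.labels e).map Prod.fst, ∃ v : V, f v = x) ∧
    ∀ u v : V, G.Adj u v ↔ ((f u, f v) ∈ KExpr.edges e ∨ (f v, f u) ∈ KExpr.edges e)

/-- `G` has clique-width at most `k`. -/
def CliqueWidthLE {V : Type} [Fintype V] (G : SimpleGraph V) (k : ℕ) : Prop :=
  ∃ e : KExpr k, KExpr.WF e ∧ Generates e G

/-- `G` has `F`-width at most `w`: there are `w` independent sets `N₁,…,N_w` of
`G` and a graph `H ∈ F` on the same vertices such that `G` is a spanning
subgraph of `H` and every edge of `H` not in `G` lies inside some `N_i`. -/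
def FWidthLE {V : Type} (G : SimpleGraph V) (F : SimpleGraph V → Prop) (w : ℕ) : Prop :=
  ∃ (N : Fin w → Set V) (H : SimpleGraph V), F H ∧ G ≤ H ∧
    (∀ i : Fin w, ∀ u ∈ N i, ∀ v ∈ N i, ¬ G.Adj u v) ∧
    (∀ u v : V, H.Adj u v → ¬ G.Adj u v → ∃ i : Fin w, u ∈ N i ∧ v ∈ N i)

namespace Stmt10
open KExpr

variable {K : ℕ}

def joins (L : List (Fin K × Fin K)) (t : KExpr K) : KExpr K :=
  L.foldr (fun p acc => .join p.1 p.2 acc) t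

def relabels (L : List (Fin K × Fin K)) (t : KExpr K) : KExpr K :=
  L.foldr (fun p acc => .relabel p.1 p.2 acc) t

def relFun (q : Fin K × Fin K) (p : ℕ × Fin K) : ℕ × Fin K :=
  if p.2 = q.1 then (p.1, q.2) else p

def applyRel (L : List (Fin K × Fin K)) (p : ℕ × Fin K) : ℕ × Fin K :=
  L.foldr relFun p

lemma labels_joins (L : List (Fin K × Fin K)) (t : KExpr K) :
    (joins L t).labels = t.labels := by
  induction L with
  | nil => rfl
  | cons p L ih => simpa [joins, KExpr.labels] using ih

lemma mem_edges_join {i j : Fin K} {t : KExpr K} {a b : ℕ} :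
    (a, b) ∈ (KExpr.join i j t).edges ↔
      (∃ p ∈ t.labels, ∃ q ∈ t.labels,
        p.2 = i ∧ q.2 = j ∧ p.1 ≠ q.1 ∧ a = p.1 ∧ b = q.1)
      ∨ (a, b) ∈ t.edges := by
  simp only [KExpr.edges, List.mem_append, List.mem_flatMap, List.mem_filterMap]
  constructor
  · rintro (⟨p, hp, q, hq, h⟩ | h)
    · split at h
      · rename_i hc
        obtain ⟨h1, h2⟩ := Prod.mk.injEq .. ▸ Option.some.inj h
        exact Or.inl ⟨p, hp, q, hq, hc.1, hc.2.1, hc.2.2, h1.symm, h2.symm⟩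
      · simp at h
    · exact Or.inr h
  · rintro (⟨p, hp, q, hq, h1, h2, h3, h4, h5⟩ | h)
    · exact Or.inl ⟨p, hp, q, hq, by simp [h1, h2, h3, h4, h5]⟩
    · exact Or.inr h

lemma mem_edges_joins (L : List (Fin K × Fin K)) (t : KExpr K) (a b : ℕ) :
    (a, b) ∈ (joins L t).edges ↔
      (∃ r ∈ L, ∃ p ∈ t.labels, ∃ q ∈ t.labels,
        p.2 = r.1 ∧ q.2 = r.2 ∧ p.1 ≠ q.1 ∧ a = p.1 ∧ b = q.1)
      ∨ (a, b) ∈ t.edges := by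
  induction L with
  | nil => simp [joins]
  | cons r L ih =>
    have : joins (r :: L) t = .join r.1 r.2 (joins L t) := rfl
    rw [this, mem_edges_join, labels_joins, ih]
    constructor
    · rintro (⟨p, hp, q, hq, h⟩ | (⟨s, hs, rest⟩ | h))
      · exact Or.inl ⟨r, List.mem_cons_self .., p, hp, q, hq, h⟩
      · exact Or.inl ⟨s, List.mem_cons_of_mem _ hs, rest⟩
      · exact Or.inr h
    · rintro (⟨s, hs, rest⟩ | h)
      · rcases List.mem_cons.mp hs with h1 | h1
        · exact Or.inl (h1 ▸ rest)
        · exact Or.inr (Or.inl ⟨s, h1, rest⟩)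
      · exact Or.inr (Or.inr h)

lemma wf_joins (L : List (Fin K × Fin K)) (t : KExpr K)
    (h : ∀ r ∈ L, r.1 ≠ r.2) (ht : t.WF) : (joins L t).WF := by
  induction L with
  | nil => exact ht
  | cons r L ih =>
    exact ⟨h r (List.mem_cons_self ..), ih fun s hs => h s (List.mem_cons_of_mem _ hs)⟩

lemma labels_relabels (L : List (Fin K × Fin K)) (t : KExpr K) :
    (relabels L t).labels = t.labels.map (applyRel L) := by
  induction L with
  | nil =>
    simp only [relabels, applyRel, List.foldr_nil]
    exact (List.map_id _).symm
  | cons q L ih =>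
    have : relabels (q :: L) t = .relabel q.1 q.2 (relabels L t) := rfl
    rw [this]
    show ((relabels L t).labels).map _ = _
    rw [ih, List.map_map]
    rfl

lemma edges_relabels (L : List (Fin K × Fin K)) (t : KExpr K) :
    (relabels L t).edges = t.edges := by
  induction L with
  | nil => rfl
  | cons q L ih => simpa [relabels, KExpr.edges] using ih

lemma wf_relabels (L : List (Fin K × Fin K)) (t : KExpr K) (ht : t.WF) :
    (relabels L t).WF := by
  induction L with
  | nil => exact ht
  | cons q L ih => exact ih

end Stmt10
namespace Stmt10
open KExpr

variable {K k w : ℕ}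

def Disj (S T : Fin w → Bool) : Prop := ∀ m, ¬(S m = true ∧ T m = true)

instance (S T : Fin w → Bool) : Decidable (Disj S T) := by
  unfold Disj; infer_instance

lemma disj_symm {S T : Fin w → Bool} (h : Disj S T) : Disj T S :=
  fun m hm => h m ⟨hm.2, hm.1⟩

noncomputable def pairsList (enc : Fin k × (Fin w → Bool) → Fin K) (i j : Fin k) :
    List (Fin K × Fin K) :=
  (((Finset.univ : Finset ((Fin w → Bool) × (Fin w → Bool))).toList.filter
    (fun p => decide (Disj p.1 p.2))).map (fun p => (enc (i, p.1), enc (j, p.2))))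

noncomputable def relabList (enc : Fin k × (Fin w → Bool) → Fin K) (i j : Fin k) :
    List (Fin K × Fin K) :=
  ((Finset.univ : Finset (Fin w → Bool)).toList).map (fun S => (enc (i, S), enc (j, S)))

noncomputable def trans (enc : Fin k × (Fin w → Bool) → Fin K) (τ : ℕ → Fin w → Bool) :
    KExpr k → KExpr K
  | .vert v i => .vert v (enc (i, τ v))
  | .union a b => .union (trans enc τ a) (trans enc τ b)
  | .join i j t => joins (pairsList enc i j) (trans enc τ t)
  | .relabel i j t => relabels (relabList enc i j) (trans enc τ t)

variable {enc : Fin k × (Fin w → Bool) → Fin K} {τ : ℕ → Fin w → Bool}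

lemma applyRel_map_gen (hinj : Function.Injective enc)
    (i j ℓ : Fin k) (S₀ : Fin w → Bool) (n : ℕ) (L : List (Fin w → Bool)) :
    applyRel (L.map fun S => (enc (i, S), enc (j, S))) (n, enc (ℓ, S₀))
      = (n, enc (if ℓ = i ∧ S₀ ∈ L then j else ℓ, S₀)) := by
  induction L with
  | nil => simp [applyRel]
  | cons S L ih =>
    have hstep : applyRel ((List.map (fun S => (enc (i, S), enc (j, S))) (S :: L)))
        (n, enc (ℓ, S₀))
        = relFun (enc (i, S), enc (j, S))
            (applyRel (L.map fun S => (enc (i, S), enc (j, S))) (n, enc (ℓ, S₀))) := rfl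
    rw [hstep, ih]
    by_cases hli : ℓ = i <;> by_cases hmem : S₀ ∈ L <;> by_cases hSS : S₀ = S <;>
      simp [relFun, hinj.eq_iff, Prod.ext_iff, hli, hmem, hSS, List.mem_cons] <;> tauto

lemma applyRel_relabList (hinj : Function.Injective enc)
    (i j ℓ : Fin k) (S₀ : Fin w → Bool) (n : ℕ) :
    applyRel (relabList enc i j) (n, enc (ℓ, S₀))
      = (n, enc (if ℓ = i then j else ℓ, S₀)) := by
  rw [relabList, applyRel_map_gen hinj]
  congr 2
  simp [Finset.mem_toList]

end Stmt10
namespace Stmt10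
open KExpr

variable {K k w : ℕ} {enc : Fin k × (Fin w → Bool) → Fin K} {τ : ℕ → Fin w → Bool}

lemma labels_trans (hinj : Function.Injective enc) (e : KExpr k) :
    (trans enc τ e).labels = e.labels.map (fun p => (p.1, enc (p.2, τ p.1))) := by
  induction e with
  | vert v i => rfl
  | union a b iha ihb => simp [trans, KExpr.labels, iha, ihb]
  | join i j t ih => rw [trans, labels_joins, ih]; rfl
  | relabel i j t ih =>
    rw [trans, labels_relabels, ih, List.map_map, KExpr.labels, List.map_map]
    apply List.map_congr_left
    intro p _
    show applyRel (relabList enc i j) (p.1, enc (p.2, τ p.1)) = _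
    rw [applyRel_relabList hinj]
    by_cases hpi : p.2 = i <;> simp [hpi]

lemma mem_pairsList {i j : Fin k} {r : Fin K × Fin K} :
    r ∈ pairsList enc i j ↔
      ∃ S T : Fin w → Bool, Disj S T ∧ r = (enc (i, S), enc (j, T)) := by
  simp only [pairsList, List.mem_map, List.mem_filter, Finset.mem_toList,
    Finset.mem_univ, true_and, decide_eq_true_eq]
  constructor
  · rintro ⟨⟨S, T⟩, hd, hr⟩
    exact ⟨S, T, hd, hr.symm⟩
  · rintro ⟨S, T, hd, hr⟩
    exact ⟨⟨S, T⟩, hd, hr.symm⟩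

lemma mem_edges_trans (hinj : Function.Injective enc) (e : KExpr k) (a b : ℕ) :
    (a, b) ∈ (trans enc τ e).edges ↔
      ((a, b) ∈ e.edges ∧ Disj (τ a) (τ b)) := by
  induction e with
  | vert v i => simp [trans, KExpr.edges]
  | union x y ihx ihy =>
    show (a, b) ∈ (trans enc τ x).edges ++ (trans enc τ y).edges ↔ _
    rw [List.mem_append, ihx, ihy]
    show _ ↔ ((a, b) ∈ x.edges ++ y.edges ∧ _)
    rw [List.mem_append]
    tauto
  | relabel i j t ih =>
    show (a, b) ∈ (relabels (relabList enc i j) (trans enc τ t)).edges ↔ _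
    rw [edges_relabels, ih]
    rfl
  | join i j t ih =>
    show (a, b) ∈ (joins (pairsList enc i j) (trans enc τ t)).edges ↔ _
    rw [mem_edges_joins, ih, mem_edges_join, labels_trans hinj]
    constructor
    · rintro (⟨r, hr, p, hp, q, hq, h1, h2, h3, h4, h5⟩ | ⟨h, hd⟩)
      · obtain ⟨S, T, hd, rfl⟩ := mem_pairsList.mp hr
        obtain ⟨p', hp', rfl⟩ := List.mem_map.mp hp
        obtain ⟨q', hq', rfl⟩ := List.mem_map.mp hq
        simp only at h1 h2 h3 h4 h5
        obtain ⟨hpi, hpS⟩ := Prod.mk.injEq .. ▸ hinj h1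
        obtain ⟨hqj, hqT⟩ := Prod.mk.injEq .. ▸ hinj h2
        subst h4; subst h5
        refine ⟨Or.inl ⟨p', hp', q', hq', hpi, hqj, h3, rfl, rfl⟩, ?_⟩
        rw [hpS, hqT]; exact hd
      · exact ⟨Or.inr h, hd⟩
    · rintro ⟨⟨p, hp, q, hq, h1, h2, h3, h4, h5⟩ | h, hd⟩
      · refine Or.inl ⟨(enc (i, τ p.1), enc (j, τ q.1)),
          mem_pairsList.mpr ⟨τ p.1, τ q.1, h4 ▸ h5 ▸ hd, rfl⟩,
          (p.1, enc (p.2, τ p.1)), List.mem_map.mpr ⟨p, hp, rfl⟩,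
          (q.1, enc (q.2, τ q.1)), List.mem_map.mpr ⟨q, hq, rfl⟩,
          by rw [h1], by rw [h2], h3, h4, h5⟩
      · exact Or.inr ⟨h, hd⟩

lemma wf_trans (hinj : Function.Injective enc) (e : KExpr k) (hwf : e.WF) :
    (trans enc τ e).WF := by
  induction e with
  | vert v i => trivial
  | union x y ihx ihy =>
    obtain ⟨h1, h2, h3⟩ := hwf
    refine ⟨ihx h1, ihy h2, ?_⟩
    intro p hp q hq
    rw [labels_trans hinj] at hp hq
    obtain ⟨p', hp', rfl⟩ := List.mem_map.mp hp
    obtain ⟨q', hq', rfl⟩ := List.mem_map.mp hq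
    exact h3 p' hp' q' hq'
  | join i j t ih =>
    obtain ⟨hij, hwt⟩ := hwf
    refine wf_joins _ _ ?_ (ih hwt)
    intro r hr
    obtain ⟨S, T, hd, rfl⟩ := mem_pairsList.mp hr
    intro hh
    exact hij (congrArg Prod.fst (hinj hh))
  | relabel i j t ih => exact wf_relabels _ _ (ih hwf)

end Stmt10
/-- If `G` is a `w`-probe `C_k`-graph (it has `F`-width at most `w`
with respect to the family of graphs of clique-width at most `k`), then the
clique-width of `G` is at most `k·2^w`. -/
theorem stmt10 {V : Type} [Fintype V] (G : SimpleGraph V) (k w : ℕ)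
    (h : FWidthLE G (fun H => CliqueWidthLE H k) w) :
    CliqueWidthLE G (k * 2 ^ w) := by
  classical
  obtain ⟨N, H, ⟨e, hwf, f, hfinj, hfmem, hfsurj, hfadj⟩, hle, hind, hcov⟩ := h
  have hcard : Fintype.card (Fin k × (Fin w → Bool)) = k * 2 ^ w := by
    simp [Fintype.card_fun]
  let enc : Fin k × (Fin w → Bool) ≃ Fin (k * 2 ^ w) := Fintype.equivFinOfCardEq hcard
  have hinj : Function.Injective (⇑enc : Fin k × (Fin w → Bool) → Fin (k * 2 ^ w)) :=
    enc.injective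
  let τ : ℕ → Fin w → Bool := fun n m => decide (∃ v : V, f v = n ∧ v ∈ N m)
  have hτ : ∀ (v : V) (m : Fin w), τ (f v) m = true ↔ v ∈ N m := by
    intro v m
    simp only [τ, decide_eq_true_eq]
    constructor
    · rintro ⟨u, hu, hm⟩; exact hfinj hu ▸ hm
    · exact fun hm => ⟨v, rfl, hm⟩
  have hkey : ((Stmt10.trans (⇑enc) τ e).labels).map Prod.fst
      = (e.labels).map Prod.fst := by
    rw [Stmt10.labels_trans hinj, List.map_map]; rfl
  refine ⟨Stmt10.trans (⇑enc) τ e, Stmt10.wf_trans hinj e hwf, f, hfinj, ?_, ?_, ?_⟩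
  · intro v; rw [hkey]; exact hfmem v
  · intro x hx; rw [hkey] at hx; exact hfsurj x hx
  · intro u v
    have hGH : G.Adj u v ↔ H.Adj u v ∧ Stmt10.Disj (τ (f u)) (τ (f v)) := by
      constructor
      · intro hG
        refine ⟨hle hG, fun m hm => ?_⟩
        exact hind m u ((hτ u m).mp hm.1) v ((hτ v m).mp hm.2) hG
      · rintro ⟨hH, hd⟩
        by_contra hG
        obtain ⟨m, h1, h2⟩ := hcov u v hH hG
        exact hd m ⟨(hτ u m).mpr h1, (hτ v m).mpr h2⟩
    rw [hGH, hfadj u v, Stmt10.mem_edges_trans hinj, Stmt10.mem_edges_trans hinj]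
    constructor
    · rintro ⟨hHe | hHe, hd⟩
      · exact Or.inl ⟨hHe, hd⟩
      · exact Or.inr ⟨hHe, Stmt10.disj_symm hd⟩
    · rintro (⟨hHe, hd⟩ | ⟨hHe, hd⟩)
      · exact ⟨Or.inl hHe, hd⟩
      · exact ⟨Or.inr hHe, Stmt10.disj_symm hd⟩
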